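/- Consider an arrangement on the flat 2-torus of n−2 geodesics of class (1,0), one geodesic of class (a,1) with 0 ≤ a ≤ n−2, and one geodesic of class (0,1), positioned so that every intersection point of the (a,1)-geodesic with the (0,1)-geodesic also lies on one of the (1,0)-geodesics. Then the complement of the union of these n geodesics has exactly 2n−4 regions. -/

import Mathlib

noncomputable section

/-- The flat two-dimensional torus `ℝ²/ℤ²`. -/
abbrev Torus : Type := AddCircle (1 : ℝ) × AddCircle (1 : ℝ)

/-- The quotient projection `ℝ² → ℝ²/ℤ²`. -/
def torusProj (v : ℝ × ℝ) : Torus :=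
  ((v.1 : AddCircle (1 : ℝ)), (v.2 : AddCircle (1 : ℝ)))

/-- A vector `(p, q) ∈ ℤ²` is primitive if `gcd(p, q) = 1`. -/
def IsPrimitive (v : ℤ × ℤ) : Prop := Int.gcd v.1 v.2 = 1

/-- The closed geodesic on the torus through (the class of) `b` in direction `v`. -/
def geodesic (b : ℝ × ℝ) (v : ℤ × ℤ) : Set Torus :=
  Set.range (fun t : ℝ => torusProj (b.1 + t * (v.1 : ℝ), b.2 + t * (v.2 : ℝ)))

/-- The number of connected components of the complement of `S`. -/
def regionCount {X : Type*} [TopologicalSpace X] (S : Set X) : ℕ :=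
  Nat.card (ConnectedComponents ↥(Sᶜ))

/-- An arrangement of `n` distinct closed geodesics, given by base points `b`
and primitive direction vectors `v`. -/
def IsArrangement {n : ℕ} (b : Fin n → ℝ × ℝ) (v : Fin n → ℤ × ℤ) : Prop :=
  (∀ i, IsPrimitive (v i)) ∧ Function.Injective (fun i => geodesic (b i) (v i))

/-- Two geodesics are parallel iff their homology classes agree up to sign. -/
def Parallel (v w : ℤ × ℤ) : Prop := v = w ∨ v = -w

open Set

lemma coe_sub' (x y : ℝ) : ((x - y : ℝ) : AddCircle (1:ℝ)) = ↑x - ↑y := rfl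
lemma coe_add' (x y : ℝ) : ((x + y : ℝ) : AddCircle (1:ℝ)) = ↑x + ↑y := rfl

lemma geodesic_horiz (b : ℝ × ℝ) : geodesic b (1,0) = {p : Torus | p.2 = ↑b.2} := by
  ext p
  simp only [geodesic, torusProj, Set.mem_range, Set.mem_setOf_eq]
  constructor
  · rintro ⟨t, rfl⟩; simp
  · intro hp
    obtain ⟨x, hx⟩ := QuotientAddGroup.mk_surjective p.1
    refine ⟨x - b.1, ?_⟩
    have hpp : p = (p.1, p.2) := rfl
    rw [hpp, hp, ← hx]
    norm_num

lemma geodesic_vert (d : ℝ × ℝ) : geodesic d (0,1) = {p : Torus | p.1 = ↑d.1} := by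
  ext p
  simp only [geodesic, torusProj, Set.mem_range, Set.mem_setOf_eq]
  constructor
  · rintro ⟨t, rfl⟩; simp
  · intro hp
    obtain ⟨x, hx⟩ := QuotientAddGroup.mk_surjective p.2
    refine ⟨x - d.2, ?_⟩
    have hpp : p = (p.1, p.2) := rfl
    rw [hpp, hp, ← hx]
    norm_num

lemma geodesic_slant (c : ℝ × ℝ) (a : ℤ) :
    geodesic c (a,1) = {p : Torus | p.1 = ↑c.1 + a • (p.2 - ↑c.2)} := by
  have key : ∀ t : ℝ, (↑(c.1 + t * (a:ℝ)) : AddCircle (1:ℝ))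
      = ↑c.1 + a • ((↑(c.2 + t * ((1:ℤ):ℝ)) : AddCircle (1:ℝ)) - ↑c.2) := by
    intro t
    have h1 : (↑(c.2 + t * ((1:ℤ):ℝ)) : AddCircle (1:ℝ)) - ↑c.2 = ↑t := by
      rw [← coe_sub']; norm_num
    rw [h1, ← AddCircle.coe_zsmul, ← coe_add']
    congr 1
    simp [zsmul_eq_mul]; ring
  ext p
  simp only [geodesic, torusProj, Set.mem_range, Set.mem_setOf_eq]
  constructor
  · rintro ⟨t, rfl⟩
    exact key t
  · intro hp
    obtain ⟨t, ht⟩ := QuotientAddGroup.mk_surjective (p.2 - (↑c.2 : AddCircle (1:ℝ)))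
    have hp2 : p.2 = ↑(c.2 + t * ((1:ℤ):ℝ)) := by
      have : ((c.2 + t * ((1:ℤ):ℝ) : ℝ) : AddCircle (1:ℝ)) = ↑c.2 + ↑t := by
        rw [← coe_add']; norm_num
      rw [this, ht]; abel
    refine ⟨t, Prod.ext ?_ hp2.symm⟩
    show (↑(c.1 + t * (a:ℝ)) : AddCircle (1:ℝ)) = p.1
    rw [key t, ← hp2, ← hp]


instance : Fact ((0:ℝ) < 1) := ⟨one_pos⟩

lemma equivIco_coe_eq {aa x : ℝ} (hx : x ∈ Set.Ico aa (aa+1)) :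
    ((AddCircle.equivIco 1 aa (x : AddCircle (1:ℝ))) : ℝ) = x := by
  have h : (AddCircle.equivIco 1 aa) ↑x = ⟨x, hx⟩ := by
    rw [Equiv.apply_eq_iff_eq_symm_apply]; rfl
  rw [h]

lemma equivIoc_coe_eq {aa x : ℝ} (hx : x ∈ Set.Ioc aa (aa+1)) :
    ((AddCircle.equivIoc 1 aa (x : AddCircle (1:ℝ))) : ℝ) = x := by
  have h : (AddCircle.equivIoc 1 aa) ↑x = ⟨x, hx⟩ := by
    rw [Equiv.apply_eq_iff_eq_symm_apply]; rfl
  rw [h]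

lemma coe_equivIco (aa : ℝ) (z : AddCircle (1:ℝ)) :
    (((AddCircle.equivIco 1 aa z) : ℝ) : AddCircle (1:ℝ)) = z :=
  (AddCircle.equivIco 1 aa).symm_apply_apply z

lemma coe_equivIoc (aa : ℝ) (z : AddCircle (1:ℝ)) :
    (((AddCircle.equivIoc 1 aa z) : ℝ) : AddCircle (1:ℝ)) = z :=
  (AddCircle.equivIoc 1 aa).symm_apply_apply z

lemma card_components_of_partition {X : Type*} [TopologicalSpace X] {ι : Type*} [Fintype ι]
    (U : ι → Set X) (ho : ∀ i, IsOpen (U i)) (hne : ∀ i, (U i).Nonempty)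
    (hconn : ∀ i, IsPreconnected (U i))
    (hdisj : ∀ i j, i ≠ j → Disjoint (U i) (U j))
    (hcov : ⋃ i, U i = Set.univ) :
    Nat.card (ConnectedComponents X) = Fintype.card ι := by
  choose pt hpt using hne
  have hclopen : ∀ i, IsClopen (U i) := by
    intro i
    have hcompl : (U i)ᶜ = ⋃ j ∈ ({i}ᶜ : Set ι), U j := by
      ext x
      constructor
      · intro hx
        have hx' : x ∈ ⋃ j, U j := hcov ▸ Set.mem_univ x
        obtain ⟨j, hj⟩ := Set.mem_iUnion.1 hx'
        have hji : j ≠ i := fun h => hx (h ▸ hj)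
        exact Set.mem_biUnion hji hj
      · intro hx hxi
        obtain ⟨j, hj, hxj⟩ := Set.mem_iUnion₂.1 hx
        exact (hdisj j i hj).le_bot ⟨hxj, hxi⟩
    refine ⟨?_, ho i⟩
    rw [← isOpen_compl_iff, hcompl]
    exact isOpen_biUnion (fun j _ => ho j)
  have hbij : Function.Bijective (fun i => ConnectedComponents.mk (pt i)) := by
    constructor
    · intro i j hij
      rw [ConnectedComponents.coe_eq_coe] at hij
      by_contra hne'
      have h1 : connectedComponent (pt j) ⊆ U i := by
        rw [← hij]
        exact (hclopen i).connectedComponent_subset (hpt i)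
      exact (hdisj i j hne').le_bot ⟨h1 (mem_connectedComponent), hpt j⟩
    · intro z
      obtain ⟨x, rfl⟩ := ConnectedComponents.surjective_coe z
      have hx : x ∈ ⋃ i, U i := hcov ▸ Set.mem_univ x
      obtain ⟨i, hi⟩ := Set.mem_iUnion.1 hx
      refine ⟨i, ?_⟩
      rw [ConnectedComponents.coe_eq_coe]
      exact (connectedComponent_eq (((hconn i).subset_connectedComponent hi) (hpt i))).symm
  rw [← Nat.card_eq_fintype_card]
  exact (Nat.card_eq_of_bijective _ hbij).symm

lemma core (m : ℕ) (hm : 1 ≤ m) (y : Fin m → AddCircle (1:ℝ))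
    (hy : Function.Injective y)
    (f : AddCircle (1:ℝ) → AddCircle (1:ℝ)) (hf : Continuous f)
    (D : AddCircle (1:ℝ))
    (hfD : ∀ z, f z = D → z ∈ Set.range y) :
    Nat.card (ConnectedComponents
      ↥(({p : Torus | p.2 ∈ Set.range y} ∪ {p : Torus | p.1 = f p.2}
          ∪ {p : Torus | p.1 = D})ᶜ)) = 2 * m := by
  haveI : NeZero m := ⟨by omega⟩
  set S : Set Torus := {p : Torus | p.2 ∈ Set.range y} ∪ {p : Torus | p.1 = f p.2}
          ∪ {p : Torus | p.1 = D} with hS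
  have hSc : Sᶜ = {p : Torus | p.2 ∉ Set.range y ∧ p.1 ≠ f p.2 ∧ p.1 ≠ D} := by
    ext p; simp [hS]; tauto
  -- lifts of the heights
  set l : Fin m → ℝ := fun i => ((AddCircle.equivIco 1 0 (y i)) : ℝ) with hl
  have hl_mem : ∀ i, l i ∈ Ico (0:ℝ) 1 := by
    intro i
    have h2 := (AddCircle.equivIco 1 0 (y i)).2
    simpa using h2
  have hl_coe : ∀ i, ((l i : ℝ) : AddCircle (1:ℝ)) = y i := fun i => coe_equivIco 0 (y i)
  have hl_inj : Function.Injective l := by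
    intro i j h
    exact hy (by rw [← hl_coe i, ← hl_coe j, h])
  set L : Finset ℝ := Finset.image l Finset.univ with hLdef
  have hLcard : L.card = m := by
    rw [hLdef, Finset.card_image_of_injective _ hl_inj, Finset.card_univ, Fintype.card_fin]
  have hLIco : ∀ x ∈ L, x ∈ Ico (0:ℝ) 1 := by
    intro x hx
    rw [hLdef, Finset.mem_image] at hx
    obtain ⟨i, -, rfl⟩ := hx
    exact hl_mem i
  have hLcoe : ∀ x ∈ L, ((x : ℝ) : AddCircle (1:ℝ)) ∈ Set.range y := by
    intro x hx
    rw [hLdef, Finset.mem_image] at hx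
    obtain ⟨i, -, rfl⟩ := hx
    exact ⟨i, (hl_coe i).symm⟩
  set u : Fin m ≃o L := L.orderIsoOfFin hLcard with hu
  set v : Fin m → ℝ := fun j => (u j : ℝ) with hv
  have hv_mono : StrictMono v := by
    intro i j h
    exact_mod_cast u.strictMono h
  have hv_mem : ∀ j, v j ∈ L := fun j => (u j).2
  have hv_surj : ∀ x ∈ L, ∃ j, v j = x := by
    intro x hx
    obtain ⟨j, hj⟩ := u.surjective ⟨x, hx⟩
    exact ⟨j, by rw [hv]; exact congrArg Subtype.val hj⟩
  have hv01 : ∀ j, v j ∈ Ico (0:ℝ) 1 := fun j => hLIco _ (hv_mem j)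
  set v0 : ℝ := v 0 with hv0
  have hv0_le : ∀ j, v0 ≤ v j := fun j => hv_mono.monotone (Fin.zero_le (a := j))
  have hv0_min : ∀ x ∈ L, v0 ≤ x := by
    intro x hx
    obtain ⟨j, rfl⟩ := hv_surj x hx
    exact hv0_le j
  have hLIco' : ∀ x ∈ L, x ∈ Ico v0 (v0 + 1) := by
    intro x hx
    exact ⟨hv0_min x hx, lt_of_lt_of_le (hLIco x hx).2 (by linarith [(hv01 0).1])⟩
  set up : Fin m → ℝ := fun j => if h : (j:ℕ)+1 < m then v ⟨(j:ℕ)+1, h⟩ else v0 + 1 with hup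
  have hlt : ∀ j, v j < up j := by
    intro j
    rw [hup]
    by_cases h : (j:ℕ)+1 < m
    · simp only [dif_pos h]
      exact hv_mono (by simp [Fin.lt_def])
    · simp only [dif_neg h]
      have := (hv01 j).2
      have := (hv01 0).1
      linarith
  have hup_le : ∀ j, up j ≤ v0 + 1 := by
    intro j
    rw [hup]
    by_cases h : (j:ℕ)+1 < m
    · simp only [dif_pos h]
      have := (hv01 ⟨(j:ℕ)+1, h⟩).2
      have := (hv01 0).1
      linarith
    · simp only [dif_neg h]
      exact le_refl _
  have hIoo_sub : ∀ j, Ioo (v j) (up j) ⊆ Ico v0 (v0+1) := by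
    intro j s hs
    exact ⟨le_trans (hv0_le j) hs.1.le, lt_of_lt_of_le hs.2 (hup_le j)⟩
  have hdisjIoo : ∀ j j' : Fin m, j < j' → up j ≤ v j' := by
    intro j j' hjj
    have h : (j:ℕ)+1 < m := lt_of_le_of_lt (Nat.succ_le_of_lt hjj) j'.2
    rw [hup]
    simp only [dif_pos h]
    exact hv_mono.monotone (by rw [Fin.le_def]; exact Nat.succ_le_of_lt hjj)
  have hnotL : ∀ (j : Fin m), ∀ x ∈ L, x ∉ Ioo (v j) (up j) := by
    intro j x hx hmem
    obtain ⟨k, rfl⟩ := hv_surj x hx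
    have hjk : j < k := by
      by_contra hc
      push_neg at hc
      exact absurd (hv_mono.monotone hc) (not_le.mpr hmem.1)
    exact absurd hmem.2 (not_lt.mpr (hdisjIoo j k hjk))
  have hcover : ∀ s : ℝ, s ∈ Ico v0 (v0+1) → s ∉ L → ∃ j, s ∈ Ioo (v j) (up j) := by
    intro s hs hsL
    have hv0s : v0 < s := by
      rcases lt_or_eq_of_le hs.1 with h | h
      · exact h
      · exact absurd (h ▸ hv_mem 0) hsL
    set T : Finset (Fin m) := Finset.univ.filter (fun k => v k < s) with hT
    have hT0 : (0 : Fin m) ∈ T := by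
      rw [hT, Finset.mem_filter]
      exact ⟨Finset.mem_univ _, by rw [← hv0]; exact hv0s⟩
    have hTne : T.Nonempty := ⟨0, hT0⟩
    set j : Fin m := T.max' hTne with hj
    have hjs : v j < s := by
      have hjmem : j ∈ T := T.max'_mem hTne
      rw [hT, Finset.mem_filter] at hjmem
      exact hjmem.2
    refine ⟨j, hjs, ?_⟩
    rw [hup]
    by_cases h : (j:ℕ)+1 < m
    · simp only [dif_pos h]
      set k : Fin m := ⟨(j:ℕ)+1, h⟩ with hk
      have hkT : k ∉ T := by
        intro hkT
        have hle := T.le_max' k hkT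
        rw [← hj] at hle
        have hle' : (k:ℕ) ≤ (j:ℕ) := hle
        have : (j:ℕ)+1 ≤ (j:ℕ) := hle'
        exact Nat.not_succ_le_self _ this
      have hns : ¬ (v k < s) := by
        intro hc
        exact hkT (by rw [hT, Finset.mem_filter]; exact ⟨Finset.mem_univ _, hc⟩)
      push_neg at hns
      rcases lt_or_eq_of_le hns with h' | h'
      · exact h'
      · exact absurd (h' ▸ hv_mem k) hsL
    · simp only [dif_neg h]
      exact hs.2
  -- coordinate functions
  set sl : AddCircle (1:ℝ) → ℝ := fun z => ((AddCircle.equivIco 1 v0 z) : ℝ) with hsl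
  have hsl_mem : ∀ z, sl z ∈ Ico v0 (v0+1) := by
    intro z
    exact (AddCircle.equivIco 1 v0 z).2
  have hsl_coe : ∀ z, ((sl z : ℝ) : AddCircle (1:ℝ)) = z := fun z => coe_equivIco v0 z
  have hsl_eq : ∀ x : ℝ, x ∈ Ico v0 (v0+1) → sl ↑x = x := by
    intro x hx
    exact equivIco_coe_eq hx
  have hY_iff : ∀ z : AddCircle (1:ℝ), z ∈ Set.range y ↔ sl z ∈ L := by
    intro z
    constructor
    · rintro ⟨i, rfl⟩
      have h1 : sl (y i) = l i := by
        rw [← hl_coe i]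
        exact hsl_eq (l i) (hLIco' _ (by rw [hLdef]; exact Finset.mem_image_of_mem l (Finset.mem_univ i)))
      rw [h1, hLdef]
      exact Finset.mem_image_of_mem l (Finset.mem_univ i)
    · intro hz
      have := hLcoe _ hz
      rwa [hsl_coe z] at this
  have hfD' : ∀ z, z ∉ Set.range y → f z ≠ D := fun z hz h => hz (hfD z h)
  set xi : AddCircle (1:ℝ) → ℝ := fun x => ((AddCircle.equivIoc 1 0 (x - D)) : ℝ) with hxi
  have hxi_mem : ∀ x, xi x ∈ Ioc (0:ℝ) 1 := by
    intro x
    have h2 := (AddCircle.equivIoc 1 0 (x - D)).2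
    exact ⟨h2.1, by linarith [h2.2]⟩
  have hxi_coe : ∀ x, ((xi x : ℝ) : AddCircle (1:ℝ)) = x - D := fun x => coe_equivIoc 0 (x - D)
  have hxi_inj : ∀ x x', xi x = xi x' → x = x' := by
    intro x x' h
    have h2 := hxi_coe x
    rw [h, hxi_coe x'] at h2
    exact sub_left_inj.mp h2.symm
  have hxi_eval : ∀ e : ℝ, e ∈ Ioc (0:ℝ) 1 → xi (D + ↑e) = e := by
    intro e he
    have h1 : (D + (e : AddCircle (1:ℝ))) - D = ↑e := by abel
    rw [hxi]
    simp only [h1]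
    exact equivIoc_coe_eq (by simpa using he)
  have hxi_one : ∀ x, xi x = 1 ↔ x = D := by
    intro x
    constructor
    · intro h
      have := hxi_coe x
      rw [h] at this
      have h1 : ((1:ℝ) : AddCircle (1:ℝ)) = 0 := AddCircle.coe_period 1
      rw [h1] at this
      have h3 : x - D = 0 := this.symm
      exact sub_eq_zero.mp h3
    · intro h
      have h4 : x = D + ((1:ℝ) : AddCircle (1:ℝ)) := by
        rw [AddCircle.coe_period 1, add_zero, h]
      rw [h4]
      exact hxi_eval 1 ⟨zero_lt_one, le_refl 1⟩
  -- continuity facts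
  have hcoe_cont : Continuous ((↑) : ℝ → AddCircle (1:ℝ)) := AddCircle.continuous_mk' 1
  have hsl_cont : ∀ z : AddCircle (1:ℝ), z ∉ Set.range y → ContinuousAt sl z := by
    intro z hz
    have hzv0 : z ≠ ↑v0 := by
      intro h
      exact hz (h ▸ hLcoe v0 (hv_mem 0))
    have c1 : ContinuousAt (AddCircle.equivIco 1 v0) z := AddCircle.continuousAt_equivIco 1 v0 hzv0
    exact continuous_subtype_val.continuousAt.comp c1
  have hxi_cont : ∀ x : AddCircle (1:ℝ), x ≠ D → ContinuousAt xi x := by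
    intro x hx
    have h1 : x - D ≠ ↑(0:ℝ) := by
      rw [QuotientAddGroup.mk_zero]
      exact sub_ne_zero.mpr hx
    have c1 : ContinuousAt (fun x : AddCircle (1:ℝ) => x - D) x :=
      (continuous_id.sub continuous_const).continuousAt
    have c2 : ContinuousAt (AddCircle.equivIoc 1 0) (x - D) :=
      AddCircle.continuousAt_equivIoc 1 0 h1
    have c3 : ContinuousAt ((AddCircle.equivIoc 1 0) ∘ (fun x : AddCircle (1:ℝ) => x - D)) x :=
      ContinuousAt.comp (f := fun x : AddCircle (1:ℝ) => x - D) c2 c1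
    have c5 : ContinuousAt ((Subtype.val) ∘ ((AddCircle.equivIoc 1 0) ∘ (fun x : AddCircle (1:ℝ) => x - D))) x :=
      continuous_subtype_val.continuousAt.comp c3
    exact c5
  set F : ℝ → ℝ := fun s => xi (f ↑s) with hF
  have hF_cont : ∀ s : ℝ, (↑s : AddCircle (1:ℝ)) ∉ Set.range y → ContinuousAt F s := by
    intro s hs
    have c1 : ContinuousAt (fun s : ℝ => ((s:ℝ) : AddCircle (1:ℝ))) s := hcoe_cont.continuousAt
    have c2 : ContinuousAt f (↑s) := hf.continuousAt
    have c3 : ContinuousAt (f ∘ (fun s : ℝ => ((s:ℝ) : AddCircle (1:ℝ)))) s :=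
      ContinuousAt.comp (f := fun s : ℝ => ((s:ℝ) : AddCircle (1:ℝ))) c2 c1
    have c4 : ContinuousAt xi (f ↑s) := hxi_cont _ (hfD' _ hs)
    have c5 : ContinuousAt (xi ∘ (f ∘ (fun s : ℝ => ((s:ℝ) : AddCircle (1:ℝ))))) s :=
      ContinuousAt.comp (f := f ∘ (fun s : ℝ => ((s:ℝ) : AddCircle (1:ℝ)))) c4 c3
    exact c5
  have hF_mem : ∀ s, F s ∈ Ioc (0:ℝ) 1 := fun s => hxi_mem _
  -- the candidate regions
  set sfun : Torus → ℝ := fun p => sl p.2 with hsfun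
  set Upos : Fin m → Set Torus :=
    fun j => {p : Torus | sfun p ∈ Ioo (v j) (up j) ∧ xi p.1 < F (sfun p)} with hUpos
  set Uneg : Fin m → Set Torus :=
    fun j => {p : Torus | sfun p ∈ Ioo (v j) (up j) ∧ F (sfun p) < xi p.1 ∧ xi p.1 < 1} with hUneg
  set U : (Fin m ⊕ Fin m) → Set Torus := Sum.elim Upos Uneg with hUdef
  have hbasic : ∀ (j : Fin m) (p : Torus), sfun p ∈ Ioo (v j) (up j) →
      p.2 ∉ Set.range y ∧ F (sfun p) = xi (f p.2) ∧ F (sfun p) ∈ Ioo (0:ℝ) 1 := by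
    intro j p hs
    have h1 : sfun p ∉ L := fun hL => hnotL j _ hL hs
    have h2 : p.2 ∉ Set.range y := fun hy2 => h1 ((hY_iff p.2).mp hy2)
    have h3 : F (sfun p) = xi (f p.2) := by
      show xi (f ↑(sl p.2)) = xi (f p.2)
      rw [hsl_coe]
    have h4 : f p.2 ≠ D := hfD' _ h2
    have h5 : xi (f p.2) ≠ 1 := fun h => h4 ((hxi_one _).mp h)
    have h6 := hxi_mem (f p.2)
    exact ⟨h2, h3, by rw [h3]; exact ⟨h6.1, lt_of_le_of_ne h6.2 h5⟩⟩
  -- the regions lie in the complement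
  have hU_sub : ∀ q, U q ⊆ Sᶜ := by
    rintro (j | j) p hp
    · obtain ⟨hs, hcond⟩ := hp
      obtain ⟨h2, h3, h4⟩ := hbasic j p hs
      rw [hSc]
      refine ⟨h2, ?_, ?_⟩
      · intro h
        rw [h3] at hcond
        exact absurd (congrArg xi h) (ne_of_lt hcond)
      · intro h
        rw [(hxi_one p.1).mpr h] at hcond
        exact absurd (hcond.trans h4.2) (lt_irrefl 1)
    · obtain ⟨hs, hcond1, hcond2⟩ := hp
      obtain ⟨h2, h3, h4⟩ := hbasic j p hs
      rw [hSc]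
      refine ⟨h2, ?_, ?_⟩
      · intro h
        rw [h3] at hcond1
        exact absurd (congrArg xi h) (ne_of_gt hcond1)
      · intro h
        rw [(hxi_one p.1).mpr h] at hcond2
        exact absurd hcond2 (lt_irrefl 1)
  -- the regions cover the complement
  have hcovS : ⋃ q, U q = Sᶜ := by
    refine subset_antisymm (Set.iUnion_subset hU_sub) ?_
    intro p hp
    rw [hSc] at hp
    obtain ⟨hpy, hpf, hpD⟩ := hp
    have h1 : sfun p ∉ L := fun hL => hpy ((hY_iff p.2).mpr hL)
    obtain ⟨j, hj⟩ := hcover (sfun p) (hsl_mem p.2) h1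
    obtain ⟨h2, h3, h4⟩ := hbasic j p hj
    have hxi1 : xi p.1 < 1 := lt_of_le_of_ne (hxi_mem p.1).2 (fun h => hpD ((hxi_one p.1).mp h))
    have hxiF : xi p.1 ≠ F (sfun p) := by
      intro h
      rw [h3] at h
      exact hpf (hxi_inj _ _ h)
    rcases lt_or_gt_of_ne hxiF with h | h
    · exact Set.mem_iUnion.mpr ⟨Sum.inl j, ⟨hj, h⟩⟩
    · exact Set.mem_iUnion.mpr ⟨Sum.inr j, ⟨hj, h, hxi1⟩⟩
  -- disjointness
  have hU_disj : ∀ q q', q ≠ q' → Disjoint (U q) (U q') := by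
    have hIoo_disj : ∀ (j j' : Fin m), j ≠ j' → ∀ s : ℝ,
        s ∈ Ioo (v j) (up j) → s ∈ Ioo (v j') (up j') → False := by
      intro j j' hjj s hs hs'
      rcases lt_or_gt_of_ne hjj with h | h
      · have hd := hdisjIoo j j' h
        have := hs.2
        have := hs'.1
        linarith
      · have hd := hdisjIoo j' j h
        have := hs'.2
        have := hs.1
        linarith
    rintro (j | j) (j' | j') hqq <;>
      refine Set.disjoint_left.mpr ?_ <;> rintro p hp hp'
    · exact hIoo_disj j j' (fun h => hqq (by rw [h])) _ hp.1 hp'.1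
    · by_cases h : j = j'
      · subst h
        exact absurd (hp.2.trans hp'.2.1) (lt_irrefl _)
      · exact hIoo_disj j j' h _ hp.1 hp'.1
    · by_cases h : j = j'
      · subst h
        exact absurd (hp'.2.trans hp.2.1) (lt_irrefl _)
      · exact hIoo_disj j j' h _ hp.1 hp'.1
    · exact hIoo_disj j j' (fun h => hqq (by rw [h])) _ hp.1 hp'.1
  -- openness
  have hU_open : ∀ q, IsOpen (U q) := by
    have key : ∀ (j : Fin m) (p : Torus), sfun p ∈ Ioo (v j) (up j) → p.1 ≠ D →
        ContinuousAt sfun p ∧ ContinuousAt (fun p : Torus => xi p.1) p ∧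
          ContinuousAt (fun p : Torus => F (sfun p)) p := by
      intro j p hs hpD
      obtain ⟨h2, h3, h4⟩ := hbasic j p hs
      have csl : ContinuousAt sl p.2 := hsl_cont p.2 h2
      have csf : ContinuousAt sfun p :=
        ContinuousAt.comp (f := fun p : Torus => p.2) csl continuousAt_snd
      have cxi : ContinuousAt (fun p : Torus => xi p.1) p :=
        ContinuousAt.comp (f := fun p : Torus => p.1) (hxi_cont p.1 hpD) continuousAt_fst
      have hsY : ((sfun p : ℝ) : AddCircle (1:ℝ)) ∉ Set.range y := by
        show ((sl p.2 : ℝ) : AddCircle (1:ℝ)) ∉ Set.range y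
        rw [hsl_coe]
        exact h2
      have cF : ContinuousAt (fun p : Torus => F (sfun p)) p :=
        ContinuousAt.comp (f := sfun) (hF_cont (sfun p) hsY) csf
      exact ⟨csf, cxi, cF⟩
    rintro (j | j) <;> rw [isOpen_iff_mem_nhds] <;> intro p hp
    · obtain ⟨hs, hcond⟩ := hp
      obtain ⟨h2, h3, h4⟩ := hbasic j p hs
      have hpD : p.1 ≠ D := by
        intro h
        rw [(hxi_one p.1).mpr h] at hcond
        exact absurd (hcond.trans h4.2) (lt_irrefl 1)
      obtain ⟨csf, cxi, cF⟩ := key j p hs hpD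
      have hnb1 : sfun ⁻¹' (Ioo (v j) (up j)) ∈ nhds p :=
        csf.preimage_mem_nhds (isOpen_Ioo.mem_nhds hs)
      have cg : ContinuousAt (fun q : Torus => (xi q.1, F (sfun q))) p := cxi.prodMk cF
      have hO : IsOpen {z : ℝ × ℝ | z.1 < z.2} := isOpen_lt continuous_fst continuous_snd
      have hnb2 : (fun q : Torus => (xi q.1, F (sfun q))) ⁻¹' {z : ℝ × ℝ | z.1 < z.2} ∈ nhds p :=
        cg.preimage_mem_nhds (hO.mem_nhds hcond)
      exact Filter.inter_mem hnb1 hnb2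
    · obtain ⟨hs, hcond1, hcond2⟩ := hp
      obtain ⟨h2, h3, h4⟩ := hbasic j p hs
      have hpD : p.1 ≠ D := fun h => absurd ((hxi_one p.1).mpr h ▸ hcond2) (lt_irrefl 1)
      obtain ⟨csf, cxi, cF⟩ := key j p hs hpD
      have hnb1 : sfun ⁻¹' (Ioo (v j) (up j)) ∈ nhds p :=
        csf.preimage_mem_nhds (isOpen_Ioo.mem_nhds hs)
      have cg : ContinuousAt (fun q : Torus => (xi q.1, F (sfun q))) p := cxi.prodMk cF
      have hO : IsOpen {z : ℝ × ℝ | z.2 < z.1 ∧ z.1 < 1} :=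
        (isOpen_lt continuous_snd continuous_fst).inter (isOpen_lt continuous_fst continuous_const)
      have hnb2 : (fun q : Torus => (xi q.1, F (sfun q))) ⁻¹' {z : ℝ × ℝ | z.2 < z.1 ∧ z.1 < 1}
          ∈ nhds p := cg.preimage_mem_nhds (hO.mem_nhds ⟨hcond1, hcond2⟩)
      exact Filter.inter_mem hnb1 hnb2
  -- facts about a chosen real in an interval
  have hmid : ∀ j : Fin m, ∃ s0 : ℝ, s0 ∈ Ioo (v j) (up j) := by
    intro j
    exact ⟨(v j + up j)/2, by constructor <;> [skip; skip] <;> [linarith [hlt j]; linarith [hlt j]]⟩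
  have hsfun_of : ∀ (j : Fin m) (s0 : ℝ), s0 ∈ Ioo (v j) (up j) →
      ∀ x : AddCircle (1:ℝ), sfun (x, (↑s0 : AddCircle (1:ℝ))) = s0 := by
    intro j s0 hs0 x
    exact hsl_eq s0 (hIoo_sub j hs0)
  have hF_lt_one : ∀ (j : Fin m) (s0 : ℝ), s0 ∈ Ioo (v j) (up j) → F s0 ∈ Ioo (0:ℝ) 1 := by
    intro j s0 hs0
    have h := hbasic j ((D : AddCircle (1:ℝ)), (↑s0 : AddCircle (1:ℝ)))
      (by rw [hsfun_of j s0 hs0]; exact hs0)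
    rw [hsfun_of j s0 hs0] at h
    exact h.2.2
  -- nonemptiness
  have hU_ne : ∀ q, (U q).Nonempty := by
    rintro (j | j) <;> obtain ⟨s0, hs0⟩ := hmid j
    · refine ⟨(D + ((F s0 / 2 : ℝ) : AddCircle (1:ℝ)), (↑s0 : AddCircle (1:ℝ))), ?_, ?_⟩
      · show sfun _ ∈ Ioo (v j) (up j)
        rw [hsfun_of j s0 hs0]
        exact hs0
      · show xi (D + ((F s0 / 2 : ℝ) : AddCircle (1:ℝ))) < F (sfun _)
        rw [hsfun_of j s0 hs0]
        have hF0 := hF_lt_one j s0 hs0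
        rw [hxi_eval (F s0 / 2) ⟨by linarith [hF0.1], by linarith [hF0.2]⟩]
        linarith [hF0.1]
    · have hF0 := hF_lt_one j s0 hs0
      refine ⟨(D + (((F s0 + 1) / 2 : ℝ) : AddCircle (1:ℝ)), (↑s0 : AddCircle (1:ℝ))), ?_, ?_, ?_⟩
      · show sfun _ ∈ Ioo (v j) (up j)
        rw [hsfun_of j s0 hs0]
        exact hs0
      · show F (sfun _) < xi (D + (((F s0 + 1) / 2 : ℝ) : AddCircle (1:ℝ)))
        rw [hsfun_of j s0 hs0]
        rw [hxi_eval ((F s0 + 1) / 2) ⟨by linarith [hF0.1], by linarith [hF0.2]⟩]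
        linarith [hF0.2]
      · show xi (D + (((F s0 + 1) / 2 : ℝ) : AddCircle (1:ℝ))) < 1
        rw [hxi_eval ((F s0 + 1) / 2) ⟨by linarith [hF0.1], by linarith [hF0.2]⟩]
        linarith [hF0.2]
  -- connectedness
  have hKconn : ∀ j : Fin m, IsPreconnected ((Ioo (v j) (up j)) ×ˢ (Ioo (0:ℝ) 1)) :=
    fun j => isPreconnected_Ioo.prod isPreconnected_Ioo
  have hFcontIoo : ∀ (j : Fin m) (s0 : ℝ), s0 ∈ Ioo (v j) (up j) → ContinuousAt F s0 := by
    intro j s0 hs0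
    apply hF_cont
    have h1 : sl ((s0 : ℝ) : AddCircle (1:ℝ)) = s0 := hsl_eq s0 (hIoo_sub j hs0)
    intro hY
    have := (hY_iff _).mp hY
    rw [h1] at this
    exact hnotL j s0 this hs0
  have hU_conn : ∀ q, IsPreconnected (U q) := by
    rintro (j | j)
    · -- positive side
      have himg : U (Sum.inl j) =
          (fun z : ℝ × ℝ => (((D + ((z.2 * F z.1 : ℝ) : AddCircle (1:ℝ)), (↑z.1 : AddCircle (1:ℝ))) : Torus))) ''
            ((Ioo (v j) (up j)) ×ˢ (Ioo (0:ℝ) 1)) := by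
        ext p
        constructor
        · rintro ⟨hs, hcond⟩
          obtain ⟨h2, h3, h4⟩ := hbasic j p hs
          have hFpos : (0:ℝ) < F (sfun p) := h4.1
          refine ⟨(sfun p, xi p.1 / F (sfun p)), ⟨hs, div_pos (hxi_mem p.1).1 hFpos,
            (div_lt_one hFpos).mpr hcond⟩, ?_⟩
          have ht : xi p.1 / F (sfun p) * F (sfun p) = xi p.1 := div_mul_cancel₀ _ (ne_of_gt hFpos)
          show ((D + ((xi p.1 / F (sfun p) * F (sfun p) : ℝ) : AddCircle (1:ℝ)), (↑(sfun p) : AddCircle (1:ℝ))) : Torus) = p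
          rw [ht]
          have h5 : ((xi p.1 : ℝ) : AddCircle (1:ℝ)) = p.1 - D := hxi_coe p.1
          have h6 : ((sfun p : ℝ) : AddCircle (1:ℝ)) = p.2 := hsl_coe p.2
          rw [h5, h6]
          have : D + (p.1 - D) = p.1 := by abel
          rw [this]
        · rintro ⟨⟨s0, t⟩, ⟨hs0, ht⟩, rfl⟩
          have hsf : sfun (D + ((t * F s0 : ℝ) : AddCircle (1:ℝ)), (↑s0 : AddCircle (1:ℝ))) = s0 :=
            hsfun_of j s0 hs0 _
          have hFm := hF_mem s0
          have htF : t * F s0 ∈ Ioc (0:ℝ) 1 := by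
            constructor
            · exact mul_pos ht.1 hFm.1
            · nlinarith [ht.2, hFm.2, hFm.1]
          constructor
          · show sfun _ ∈ Ioo (v j) (up j)
            rw [hsf]
            exact hs0
          · show xi (D + ((t * F s0 : ℝ) : AddCircle (1:ℝ))) < F (sfun _)
            rw [hsf, hxi_eval _ htF]
            nlinarith [ht.2, hFm.1]
      rw [himg]
      refine (hKconn j).image _ ?_
      intro z hz
      obtain ⟨hz1, hz2⟩ := hz
      apply ContinuousAt.continuousWithinAt
      have cF0 : ContinuousAt F z.1 := hFcontIoo j z.1 hz1
      have cF : ContinuousAt (fun z : ℝ × ℝ => F z.1) z :=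
        ContinuousAt.comp (f := fun z : ℝ × ℝ => z.1) cF0 continuousAt_fst
      have cmul : ContinuousAt (fun z : ℝ × ℝ => z.2 * F z.1) z := continuousAt_snd.mul cF
      have ccoe1 : ContinuousAt (fun z : ℝ × ℝ => ((z.2 * F z.1 : ℝ) : AddCircle (1:ℝ))) z :=
        ContinuousAt.comp (f := fun z : ℝ × ℝ => z.2 * F z.1) hcoe_cont.continuousAt cmul
      have cfst : ContinuousAt (fun z : ℝ × ℝ => D + ((z.2 * F z.1 : ℝ) : AddCircle (1:ℝ))) z :=
        continuousAt_const.add ccoe1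
      have csnd : ContinuousAt (fun z : ℝ × ℝ => ((z.1 : ℝ) : AddCircle (1:ℝ))) z :=
        ContinuousAt.comp (f := fun z : ℝ × ℝ => z.1) hcoe_cont.continuousAt continuousAt_fst
      exact cfst.prodMk csnd
    · -- negative side
      have himg : U (Sum.inr j) =
          (fun z : ℝ × ℝ => (((D + ((F z.1 + z.2 * (1 - F z.1) : ℝ) : AddCircle (1:ℝ)), (↑z.1 : AddCircle (1:ℝ))) : Torus))) ''
            ((Ioo (v j) (up j)) ×ˢ (Ioo (0:ℝ) 1)) := by
        ext p
        constructor
        · rintro ⟨hs, hcond1, hcond2⟩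
          obtain ⟨h2, h3, h4⟩ := hbasic j p hs
          have hF1 : F (sfun p) < 1 := h4.2
          have h1F : (0:ℝ) < 1 - F (sfun p) := by linarith
          refine ⟨(sfun p, (xi p.1 - F (sfun p)) / (1 - F (sfun p))),
            ⟨hs, div_pos (by linarith) h1F, (div_lt_one h1F).mpr (by linarith)⟩, ?_⟩
          have ht : F (sfun p) + (xi p.1 - F (sfun p)) / (1 - F (sfun p)) * (1 - F (sfun p)) = xi p.1 := by
            rw [div_mul_cancel₀ _ (ne_of_gt h1F)]
            ring
          show ((D + ((F (sfun p) + (xi p.1 - F (sfun p)) / (1 - F (sfun p)) * (1 - F (sfun p)) : ℝ) : AddCircle (1:ℝ)), ((sfun p : ℝ) : AddCircle (1:ℝ))) : Torus) = p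
          rw [ht]
          have h5 : ((xi p.1 : ℝ) : AddCircle (1:ℝ)) = p.1 - D := hxi_coe p.1
          have h6 : ((sfun p : ℝ) : AddCircle (1:ℝ)) = p.2 := hsl_coe p.2
          rw [h5, h6]
          have : D + (p.1 - D) = p.1 := by abel
          rw [this]
        · rintro ⟨⟨s0, t⟩, ⟨hs0, ht⟩, rfl⟩
          have hsf : sfun (D + ((F s0 + t * (1 - F s0) : ℝ) : AddCircle (1:ℝ)), (↑s0 : AddCircle (1:ℝ))) = s0 :=
            hsfun_of j s0 hs0 _
          have hF0 := hF_lt_one j s0 hs0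
          have htF : F s0 + t * (1 - F s0) ∈ Ioc (0:ℝ) 1 := by
            constructor
            · nlinarith [ht.1, hF0.1, hF0.2]
            · nlinarith [ht.2, hF0.2]
          refine ⟨?_, ?_, ?_⟩
          · show sfun _ ∈ Ioo (v j) (up j)
            rw [hsf]
            exact hs0
          · show F (sfun _) < xi (D + ((F s0 + t * (1 - F s0) : ℝ) : AddCircle (1:ℝ)))
            rw [hsf, hxi_eval _ htF]
            nlinarith [ht.1, hF0.2]
          · show xi (D + ((F s0 + t * (1 - F s0) : ℝ) : AddCircle (1:ℝ))) < 1
            rw [hxi_eval _ htF]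
            nlinarith [ht.2, hF0.2]
      rw [himg]
      refine (hKconn j).image _ ?_
      intro z hz
      obtain ⟨hz1, hz2⟩ := hz
      apply ContinuousAt.continuousWithinAt
      have cF0 : ContinuousAt F z.1 := hFcontIoo j z.1 hz1
      have cF : ContinuousAt (fun z : ℝ × ℝ => F z.1) z :=
        ContinuousAt.comp (f := fun z : ℝ × ℝ => z.1) cF0 continuousAt_fst
      have cmul : ContinuousAt (fun z : ℝ × ℝ => F z.1 + z.2 * (1 - F z.1)) z :=
        cF.add (continuousAt_snd.mul (continuousAt_const.sub cF))
      have ccoe1 : ContinuousAt (fun z : ℝ × ℝ => ((F z.1 + z.2 * (1 - F z.1) : ℝ) : AddCircle (1:ℝ))) z :=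
        ContinuousAt.comp (f := fun z : ℝ × ℝ => F z.1 + z.2 * (1 - F z.1)) hcoe_cont.continuousAt cmul
      have cfst : ContinuousAt (fun z : ℝ × ℝ => D + ((F z.1 + z.2 * (1 - F z.1) : ℝ) : AddCircle (1:ℝ))) z :=
        continuousAt_const.add ccoe1
      have csnd : ContinuousAt (fun z : ℝ × ℝ => ((z.1 : ℝ) : AddCircle (1:ℝ))) z :=
        ContinuousAt.comp (f := fun z : ℝ × ℝ => z.1) hcoe_cont.continuousAt continuousAt_fst
      exact cfst.prodMk csnd
  -- transfer to the subtype and count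
  have hval : Topology.IsInducing (Subtype.val : ↥(Sᶜ) → Torus) := Topology.IsInducing.subtypeVal
  set W : (Fin m ⊕ Fin m) → Set ↥(Sᶜ) := fun q => Subtype.val ⁻¹' (U q) with hW
  have hWopen : ∀ q, IsOpen (W q) := fun q => (hU_open q).preimage continuous_subtype_val
  have hWne : ∀ q, (W q).Nonempty := by
    intro q
    obtain ⟨x, hx⟩ := hU_ne q
    exact ⟨⟨x, hU_sub q hx⟩, hx⟩
  have hWconn : ∀ q, IsPreconnected (W q) := by
    intro q
    rw [← hval.isPreconnected_image]
    have himg : Subtype.val '' (W q) = U q := by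
      rw [hW, Subtype.image_preimage_coe]
      exact Set.inter_eq_self_of_subset_right (hU_sub q)
    rw [himg]
    exact hU_conn q
  have hWdisj : ∀ q q', q ≠ q' → Disjoint (W q) (W q') :=
    fun q q' h => (hU_disj q q' h).preimage _
  have hWcov : ⋃ q, W q = Set.univ := by
    ext x
    simp only [Set.mem_iUnion, Set.mem_univ, iff_true]
    have hx : (x : Torus) ∈ ⋃ q, U q := by rw [hcovS]; exact x.2
    obtain ⟨q, hq⟩ := Set.mem_iUnion.mp hx
    exact ⟨q, hq⟩
  have hfinal := card_components_of_partition W hWopen hWne hWconn hWdisj hWcov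
  rw [hfinal, Fintype.card_sum, Fintype.card_fin]
  omega


/-- The arrangement of `n-2` geodesics of class `(1,0)`, one of class `(a,1)`
and one of class `(0,1)`, with all intersection points of the last two lying on
the first `n-2` geodesics, has exactly `2n - 4` regions. -/
theorem stmt9 (n : ℕ) (hn : 3 ≤ n) (b : Fin (n - 2) → ℝ × ℝ) (c d : ℝ × ℝ)
    (a : ℤ) (ha0 : 0 ≤ a) (ha1 : a ≤ (n : ℤ) - 2)
    (hinj : Function.Injective (fun i => geodesic (b i) ((1 : ℤ), (0 : ℤ))))
    (hcd : geodesic c (a, 1) ≠ geodesic d (0, 1))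
    (hc : ∀ i, geodesic (b i) (1, 0) ≠ geodesic c (a, 1))
    (hd : ∀ i, geodesic (b i) (1, 0) ≠ geodesic d (0, 1))
    (hinc : geodesic c (a, 1) ∩ geodesic d (0, 1) ⊆ ⋃ i, geodesic (b i) (1, 0)) :
    regionCount ((⋃ i, geodesic (b i) (1, 0)) ∪ geodesic c (a, 1) ∪ geodesic d (0, 1)) =
      2 * n - 4 := by
  have hm : 1 ≤ n - 2 := by omega
  set y : Fin (n-2) → AddCircle (1:ℝ) := fun i => ((b i).2 : AddCircle (1:ℝ)) with hy
  have hyinj : Function.Injective y := by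
    intro i j h
    apply hinj
    show geodesic (b i) (1, 0) = geodesic (b j) (1, 0)
    rw [geodesic_horiz, geodesic_horiz]
    have h' : ((b i).2 : AddCircle (1:ℝ)) = ((b j).2 : AddCircle (1:ℝ)) := h
    rw [h']
  set f : AddCircle (1:ℝ) → AddCircle (1:ℝ) := fun z => ↑c.1 + a • (z - ↑c.2) with hf
  have hfcont : Continuous f := by
    apply continuous_const.fun_add
    exact (continuous_zsmul a).comp (continuous_id.sub continuous_const)
  set D : AddCircle (1:ℝ) := ((d.1 : ℝ) : AddCircle (1:ℝ)) with hD
  have hfD : ∀ z, f z = D → z ∈ Set.range y := by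
    intro z hz
    have hmem : ((D, z) : Torus) ∈ geodesic c (a,1) ∩ geodesic d (0,1) := by
      constructor
      · rw [geodesic_slant]
        exact hz.symm
      · rw [geodesic_vert]
        rfl
    have := hinc hmem
    rw [Set.mem_iUnion] at this
    obtain ⟨i, hi⟩ := this
    rw [geodesic_horiz] at hi
    exact ⟨i, hi.symm⟩
  have hset : (⋃ i, geodesic (b i) (1, 0)) ∪ geodesic c (a, 1) ∪ geodesic d (0, 1)
      = {p : Torus | p.2 ∈ Set.range y} ∪ {p : Torus | p.1 = f p.2}
          ∪ {p : Torus | p.1 = D} := by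
    congr 1
    congr 1
    · ext p
      simp only [Set.mem_iUnion, geodesic_horiz, Set.mem_setOf_eq, Set.mem_range]
      exact ⟨fun ⟨i, h⟩ => ⟨i, h.symm⟩, fun ⟨i, h⟩ => ⟨i, h.symm⟩⟩
    · rw [geodesic_slant]
    · rw [geodesic_vert]
  have hrc := core (n-2) hm y hyinj f hfcont D hfD
  show Nat.card (ConnectedComponents
    ↥(((⋃ i, geodesic (b i) (1, 0)) ∪ geodesic c (a, 1) ∪ geodesic d (0, 1))ᶜ)) = 2 * n - 4
  rw [hset, hrc]
  omega
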